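/- Let A be a commutative ring, I a set, and R = A[(X_i)_{i∈I}] the polynomial ring. If there exists a proper monomial ideal 𝔞 ⊊ R with Γ_{⌊𝔞⌋} = Γ_{√𝔞} (i.e., Γ_{⌊𝔞⌋}(M) = Γ_{√𝔞}(M) for every R-module M), then the nilradical nil(A) of A is nilpotent. (Implication (iii) ⇒ (i) of the unnumbered Proposition of Section 2.) -/

import Mathlib

open MvPolynomial

/-- `suppInd μ` is the characteristic function of the support of `μ`,
so that `X^(suppInd μ) = ∏_{i : μ i > 0} X i`. -/
noncomputable def suppInd {I : Type v} (μ : I →₀ ℕ) : I →₀ ℕ :=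
  μ.mapRange (fun n => if n = 0 then 0 else 1) (by simp)

/-- A monomial ideal of `A[(X_i)_{i ∈ I}]` is an ideal generated by a set of monomials. -/
def IsMonomialIdeal {A : Type u} [CommRing A] {I : Type v}
    (𝔞 : Ideal (MvPolynomial I A)) : Prop :=
  ∃ E : Set (I →₀ ℕ), 𝔞 = Ideal.span ((fun μ => monomial μ (1 : A)) '' E)

/-- `⌊𝔞⌋` is the ideal generated by the monomials `X^(suppInd μ)` for all monomials
`X^μ ∈ 𝔞`. -/
noncomputable def mvFloor {A : Type u} [CommRing A] {I : Type v}
    (𝔞 : Ideal (MvPolynomial I A)) : Ideal (MvPolynomial I A) :=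
  Ideal.span {f | ∃ μ : I →₀ ℕ, monomial μ (1 : A) ∈ 𝔞 ∧ f = monomial (suppInd μ) (1 : A)}

/-- implication (iii) ⇒ (i) of the unnumbered Proposition of
Section 2: if there exists a proper monomial ideal `𝔞` of `R = A[(X_i)_{i ∈ I}]`
with `Γ_⌊𝔞⌋ = Γ_√𝔞`, then the nilradical of `A` is nilpotent. -/
theorem nilpotent_nilradical_of_torsion_floor_eq_torsion_radical
    {A : Type u} [CommRing A] {I : Type v}
    (𝔞 : Ideal (MvPolynomial I A)) (h : IsMonomialIdeal 𝔞) (hproper : 𝔞 ≠ ⊤)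
    (heq : ∀ (M : Type (max u v)) [AddCommGroup M] [Module (MvPolynomial I A) M] (x : M),
      (∃ n : ℕ, (mvFloor 𝔞) ^ n ≤ Ideal.torsionOf (MvPolynomial I A) M x) ↔
        (∃ n : ℕ, 𝔞.radical ^ n ≤ Ideal.torsionOf (MvPolynomial I A) M x)) :
    ∃ n : ℕ, nilradical A ^ n = 0 := by
  classical
  -- torsionOf of 1 in quotient is the ideal
  have htor : ∀ 𝔟 : Ideal (MvPolynomial I A),
      Ideal.torsionOf (MvPolynomial I A) (MvPolynomial I A ⧸ 𝔟) 1 = 𝔟 := by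
    intro 𝔟
    ext r
    rw [Ideal.mem_torsionOf_iff]
    have hsm : r • (1 : MvPolynomial I A ⧸ 𝔟) = Ideal.Quotient.mk 𝔟 r := by
      have : r • (Submodule.Quotient.mk (1 : MvPolynomial I A) : MvPolynomial I A ⧸ 𝔟)
          = Submodule.Quotient.mk (r • 1) := (Submodule.Quotient.mk_smul 𝔟 r 1).symm
      simpa [smul_eq_mul] using this
    rw [hsm, Ideal.Quotient.eq_zero_iff_mem]
  obtain ⟨n, hn⟩ : ∃ n : ℕ, 𝔞.radical ^ n ≤ mvFloor 𝔞 := by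
    have := (heq (MvPolynomial I A ⧸ mvFloor 𝔞) 1).mp ⟨1, by rw [htor, pow_one]⟩
    simpa [htor] using this
  -- mvFloor 𝔞 has zero constant coefficient
  have hker : mvFloor 𝔞 ≤ RingHom.ker (constantCoeff (R := A) (σ := I)) := by
    rw [mvFloor, Ideal.span_le]
    rintro f ⟨μ, hμ, rfl⟩
    have hμ0 : μ ≠ 0 := by
      rintro rfl
      exact hproper (Ideal.eq_top_iff_one _ |>.mpr (by simpa using hμ))
    have hs : suppInd μ ≠ 0 := by
      intro hs
      apply hμ0
      ext i
      have := DFunLike.congr_fun hs i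
      simpa [suppInd, Finsupp.mapRange_apply] using this
    simp [RingHom.mem_ker, constantCoeff_monomial, hs]
  -- nil(A) maps into the radical
  have hmap : Ideal.map (C : A →+* MvPolynomial I A) (nilradical A) ≤ 𝔞.radical := by
    rw [Ideal.map_le_iff_le_comap]
    intro a ha
    obtain ⟨k, hk⟩ := ha
    exact ⟨k, by rw [← map_pow, hk, map_zero]; exact 𝔞.zero_mem⟩
  refine ⟨n, ?_⟩
  rw [Ideal.zero_eq_bot, eq_bot_iff]
  intro a ha
  have h1 : C a ∈ Ideal.map (C : A →+* MvPolynomial I A) (nilradical A ^ n) :=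
    Ideal.mem_map_of_mem _ ha
  rw [Ideal.map_pow] at h1
  have h2 : C a ∈ RingHom.ker (constantCoeff (R := A) (σ := I)) :=
    hker (hn (Ideal.pow_right_mono hmap n h1))
  simpa [RingHom.mem_ker] using h2
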